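/- Let n = sm with m odd, let c ∈ F_{p^s}, and let F be a polynomial with coefficients in F_{p^s}. If F is almost perfect c-nonlinear on F_{p^n} (i.e., for all a, b the equation F(x+a) − cF(x) = b has at most 2 solutions), then for all a, b ∈ F_{p^s}, the equation F(x+a) − cF(x) = b has no solution x in F_{p^n} \ F_{p^s}. -/
import Mathlib


/-- `F` with coefficients in `𝔽_{p^s}`, `c ∈ 𝔽_{p^s}`, `F` almost perfect
c-nonlinear on `𝔽_{p^n}` (`n = s·m`, `m` odd): for `a, b ∈ 𝔽_{p^s}` the equation
`F(x+a) - c·F(x) = b` has no solution outside `𝔽_{p^s}`. -/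
theorem stmt_3 (p s m n : ℕ) [Fact p.Prime] (hs : 0 < s) (hm : Odd m) (hn : n = s * m)
    (c : GaloisField p n) (hc : c ^ p ^ s = c)
    (F : GaloisField p n → GaloisField p n)
    (hcoef : ∀ x : GaloisField p n, F (x ^ p ^ s) = F x ^ p ^ s)
    (hapcn : ∀ a b : GaloisField p n,
      Nat.card {x : GaloisField p n // F (x + a) - c * F x = b} ≤ 2)
    (a b : GaloisField p n) (ha : a ^ p ^ s = a) (hb : b ^ p ^ s = b) :
    ∀ x : GaloisField p n, F (x + a) - c * F x = b → x ^ p ^ s = x := by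
  intro x hx
  by_contra hne
  set q := p ^ s with hq
  have hp : p.Prime := Fact.out
  have hq0 : q ≠ 0 := pow_ne_zero s hp.pos.ne'
  have hn0 : n ≠ 0 := by
    obtain ⟨k, hk⟩ := hm
    subst hn hk
    positivity
  -- the solution set is closed under x ↦ x^q
  have hsol : ∀ y : GaloisField p n, F (y + a) - c * F y = b →
      F (y ^ q + a) - c * F (y ^ q) = b := by
    intro y hy
    have h1 : F (y ^ q + a) = F (y + a) ^ q := by
      conv_lhs => rw [← ha, hq, ← add_pow_char_pow, hcoef]
    have h2 : c * F (y ^ q) = (c * F y) ^ q := by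
      rw [hcoef, mul_pow, hc]
    rw [h1, h2, hq, ← sub_pow_char_pow, hy, ← hq, hb]
  -- Frobenius is injective
  have hinj : ∀ u v : GaloisField p n, u ^ q = v ^ q → u = v := by
    intro u v huv
    have h0 : (u - v) ^ q = 0 := by
      rw [hq, sub_pow_char_pow, ← hq, huv, sub_self]
    exact sub_eq_zero.mp (pow_eq_zero_iff hq0 |>.mp h0)
  -- key: t^(q*q) = t implies t^q = t (uses m odd and x^{p^n} = x)
  haveI : Fintype (GaloisField p n) := Fintype.ofFinite _
  have hcard : Fintype.card (GaloisField p n) = p ^ n := by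
    rw [← Nat.card_eq_fintype_card]; exact GaloisField.card p n hn0
  have key : ∀ t : GaloisField p n, t ^ (q * q) = t → t ^ q = t := by
    intro t ht
    obtain ⟨k, hk⟩ := hm
    have hpow : ∀ j : ℕ, t ^ (q * q) ^ j = t := by
      intro j
      induction j with
      | zero => simp
      | succ j ih => rw [pow_succ, pow_mul, ih, ht]
    have h1 : t ^ q ^ (m + 1) = t := by
      have := hpow (k + 1)
      have hq2 : (q * q) ^ (k + 1) = q ^ (m + 1) := by
        rw [← pow_two, ← pow_mul, hk]
        ring_nf
      rwa [hq2] at this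
    have htm : t ^ q ^ m = t := by
      have hqm : q ^ m = Fintype.card (GaloisField p n) := by
        rw [hcard, hq, ← pow_mul, hn]
      rw [hqm, FiniteField.pow_card]
    have h2 : t ^ q ^ (m + 1) = t ^ q := by
      rw [pow_succ, pow_mul, htm]
    rw [← h2, h1]
  -- three distinct solutions
  have hy := hsol x hx
  have hz := hsol _ hy
  have hxy : x ≠ x ^ q := fun h => hne h.symm
  have hyz : x ^ q ≠ (x ^ q) ^ q := fun h => hne (hinj _ _ h.symm)
  have hxz : x ≠ (x ^ q) ^ q := by
    intro h
    exact hne (key x (by rw [pow_mul]; exact h.symm))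
  have h3 : 3 ≤ Nat.card {t : GaloisField p n // F (t + a) - c * F t = b} := by
    have e : Nat.card {t : GaloisField p n // F (t + a) - c * F t = b}
        = ({t : GaloisField p n | F (t + a) - c * F t = b} : Set _).ncard :=
      Nat.card_coe_set_eq _
    rw [e]
    have hsub : ({x, x ^ q, (x ^ q) ^ q} : Set (GaloisField p n)) ⊆
        {t : GaloisField p n | F (t + a) - c * F t = b} := by
      rintro t (rfl | rfl | rfl)
      · exact hx
      · exact hy
      · exact hz
    have htri : ({x, x ^ q, (x ^ q) ^ q} : Set (GaloisField p n)).ncard = 3 :=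
      Set.ncard_eq_three.mpr ⟨x, x ^ q, (x ^ q) ^ q, hxy, hxz, hyz, rfl⟩
    calc 3 = ({x, x ^ q, (x ^ q) ^ q} : Set (GaloisField p n)).ncard := htri.symm
      _ ≤ _ := Set.ncard_le_ncard hsub (Set.toFinite _)
  have := hapcn a b
  omega
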